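/- Let M be a matroid on {1, …, n} with base family 𝓑. Define iterates of the adjacency operation by A⁰(𝓑) = 𝓑 and A^{ℓ+1}(𝓑) = A(A^ℓ(𝓑)). Then for every ℓ ≥ 0, A^ℓ(𝓑) = S_ℓ(𝓑); that is, the family of ℓ-th multigraded shift supports of a matroidal ideal is obtained by taking ℓ times iterated adjacency families starting from 𝓑. -/

import Mathlib

/-- Two sets are *adjacent* if each has exactly one element outside the other. -/
def AdjacentSets {α : Type*} (B C : Set α) : Prop :=
  (B \ C).ncard = 1 ∧ (C \ B).ncard = 1

/-- The *adjacency family* of a family of sets: all unions of adjacent pairs of members. -/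
def adjFam {α : Type*} (𝓕 : Set (Set α)) : Set (Set α) :=
  {U | ∃ B ∈ 𝓕, ∃ C ∈ 𝓕, AdjacentSets B C ∧ U = B ∪ C}

/-- For a family `𝓑` of subsets of `{1, …, n}` (ordered so that `i >_lex j ↔ i < j` as
integers) and `B ∈ 𝓑`, the set `set(B)` consists of all `e ∉ B` for which there exists
`t ∈ B` with `e >_lex t` (that is, `e < t`) and `(B \ {t}) ∪ {e} ∈ 𝓑`. -/
def lexSet {n : ℕ} (𝓑 : Set (Set (Fin n))) (B : Set (Fin n)) : Set (Fin n) :=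
  {e | e ∉ B ∧ ∃ t ∈ B, e < t ∧ insert e (B \ {t}) ∈ 𝓑}

/-- `S_ℓ(𝓑) = { B ∪ E : B ∈ 𝓑, E ⊆ set(B), |E| = ℓ }`, the family of supports of the
`ℓ`-th multigraded shifts of the matroidal ideal of `𝓑`. -/
def shiftFam {n : ℕ} (𝓑 : Set (Set (Fin n))) (ℓ : ℕ) : Set (Set (Fin n)) :=
  {U | ∃ B ∈ 𝓑, ∃ E, E ⊆ lexSet 𝓑 B ∧ E.ncard = ℓ ∧ U = B ∪ E}

open Set

section Aux

variable {n : ℕ} {M : Matroid (Fin n)}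

/-- Weight of a set: the sum of the values of its elements. -/
noncomputable def wtFn {n : ℕ} (B : Set (Fin n)) : ℕ :=
  ∑ x : Fin n, B.indicator (fun y => (y : ℕ)) x

lemma wtFn_insert {B : Set (Fin n)} {a : Fin n} (ha : a ∉ B) :
    wtFn (insert a B) = wtFn B + a := by
  unfold wtFn
  have hd : Disjoint ({a} : Set (Fin n)) B := by simpa using ha
  have h : ∀ x : Fin n, (insert a B).indicator (fun y => (y : ℕ)) x
      = B.indicator (fun y => (y : ℕ)) x + ({a} : Set (Fin n)).indicator (fun y => (y : ℕ)) x := by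
    intro x
    rw [Set.insert_eq, Set.indicator_union_of_disjoint hd]
    exact add_comm _ _
  rw [Finset.sum_congr rfl (fun x _ => h x), Finset.sum_add_distrib]
  congr 1
  rw [Finset.sum_eq_single a]
  · simp
  · intro b _ hb
    exact Set.indicator_of_notMem (by simpa using hb) _
  · intro h'
    exact absurd (Finset.mem_univ a) h'

lemma wtFn_remove {B : Set (Fin n)} {a : Fin n} (ha : a ∈ B) :
    wtFn B = wtFn (B \ {a}) + a := by
  have h : a ∉ B \ ({a} : Set (Fin n)) := by simp
  have := wtFn_insert h
  rwa [Set.insert_diff_singleton, Set.insert_eq_of_mem ha] at this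

/-- The reverse exchange property: for a base `B` and a nonloop `e ∉ B`, some element
`t` of `B` can be exchanged for `e`. -/
lemma exists_rev_exchange (hE : M.E = Set.univ) {B : Set (Fin n)} {e : Fin n}
    (hB : M.IsBase B) (heB : e ∉ B) (he : M.Indep {e}) :
    ∃ t ∈ B, M.IsBase (insert e (B \ {t})) := by
  obtain ⟨J, hJ, heJ⟩ := he.subset_isBasis_of_subset
    (Set.singleton_subset_iff.mpr (Set.mem_insert e B))
    (by rw [hE]; exact Set.subset_univ _)
  have hJbase : M.IsBase J := hJ.indep.isBase_of_ground_subset_closure <| by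
    rw [← hB.closure_eq]
    exact (M.closure_subset_closure (Set.subset_insert e B)).trans
      hJ.closure_eq_closure.symm.subset
  have heJ' : e ∈ J := heJ rfl
  have hJB : J \ {e} ⊆ B := by
    intro x hx
    rcases hJ.subset hx.1 with h | h
    · exact absurd h hx.2
    · exact h
  have hcard : J.ncard = B.ncard := hJbase.ncard_eq_ncard_of_isBase hB
  have hBpos : 0 < B.ncard := by
    rw [← hcard]
    exact (Set.ncard_pos (Set.toFinite J)).mpr ⟨e, heJ'⟩
  have h1 : (J \ {e}).ncard = B.ncard - 1 := by
    rw [Set.ncard_diff_singleton_of_mem heJ', hcard]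
  have h2 : (B \ (J \ {e})).ncard = 1 := by
    rw [Set.ncard_diff hJB, h1]
    omega
  obtain ⟨t, ht⟩ := Set.ncard_eq_one.mp h2
  have ht' : t ∈ B \ (J \ {e}) := by rw [ht]; rfl
  have htB : t ∈ B := ht'.1
  have hJe : J \ {e} = B \ {t} := by
    ext x
    constructor
    · intro hx
      refine ⟨hJB hx, ?_⟩
      intro hxt
      obtain rfl : x = t := hxt
      exact ht'.2 hx
    · intro hx
      by_contra hxJ
      have : x ∈ B \ (J \ {e}) := ⟨hx.1, hxJ⟩
      rw [ht] at this
      exact hx.2 this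
  refine ⟨t, htB, ?_⟩
  have hJform : insert e (B \ {t}) = J := by
    rw [← hJe, Set.insert_diff_singleton, Set.insert_eq_of_mem heJ']
  rw [hJform]
  exact hJbase

/-- Intrinsic characterization, forward direction: a loop-free spanning set `U`
containing a base with `ℓ` extra elements lies in `S_ℓ`. -/
lemma mem_shiftFam_of_good (hE : M.E = Set.univ) {𝓑 : Set (Set (Fin n))}
    (h𝓑 : 𝓑 = {B | M.IsBase B}) {U : Set (Fin n)} {ℓ : ℕ} {B₀ : Set (Fin n)}
    (hB₀ : M.IsBase B₀) (hB₀U : B₀ ⊆ U) (hcard : (U \ B₀).ncard = ℓ)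
    (hloops : ∀ e ∈ U, M.Indep {e}) :
    U ∈ shiftFam 𝓑 ℓ := by
  classical
  -- choose a base inside U of maximal weight
  have hfin : ({B | M.IsBase B ∧ B ⊆ U} : Set (Set (Fin n))).Finite := Set.toFinite _
  obtain ⟨B, hBS, hmax⟩ := Set.exists_max_image {B | M.IsBase B ∧ B ⊆ U} wtFn hfin
    ⟨B₀, hB₀, hB₀U⟩
  obtain ⟨hB, hBU⟩ := hBS
  refine ⟨B, by rw [h𝓑]; exact hB, U \ B, ?_, ?_, ?_⟩
  · -- U \ B ⊆ lexSet 𝓑 B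
    intro e he
    obtain ⟨heU, heB⟩ := he
    obtain ⟨t, htB, htbase⟩ := exists_rev_exchange hE hB heB (hloops e heU)
    refine ⟨heB, t, htB, ?_, by rw [h𝓑]; exact htbase⟩
    -- e < t by maximality of weight
    by_contra hlt
    push_neg at hlt
    have hne : e ≠ t := fun h => heB (h ▸ htB)
    have htlt : t < e := lt_of_le_of_ne hlt (fun h => hne h.symm)
    have hsub : insert e (B \ {t}) ⊆ U :=
      Set.insert_subset heU ((Set.diff_subset).trans hBU)
    have hle := hmax _ ⟨htbase, hsub⟩
    have heB' : e ∉ B \ ({t} : Set (Fin n)) := fun h => heB h.1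
    rw [wtFn_insert heB', wtFn_remove htB] at hle
    have : (e : ℕ) < (t : ℕ) := by omega
    exact absurd this (not_lt.mpr (le_of_lt htlt))
  · -- cardinality
    rw [Set.ncard_diff hBU, Set.ncard_diff hB₀U] at *
    rw [hB.ncard_eq_ncard_of_isBase hB₀]
    omega
  · rw [Set.union_diff_cancel hBU]

/-- Intrinsic characterization, backward direction. -/
lemma good_of_mem_shiftFam (hE : M.E = Set.univ) {𝓑 : Set (Set (Fin n))}
    (h𝓑 : 𝓑 = {B | M.IsBase B}) {U : Set (Fin n)} {ℓ : ℕ}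
    (hU : U ∈ shiftFam 𝓑 ℓ) :
    ∃ B, M.IsBase B ∧ B ⊆ U ∧ (U \ B).ncard = ℓ ∧ ∀ e ∈ U, M.Indep {e} := by
  obtain ⟨B, hB, E, hElex, hEcard, rfl⟩ := hU
  rw [h𝓑] at hB hElex
  have hB' : M.IsBase B := hB
  have hdisj : ∀ e ∈ E, e ∉ B := fun e he => (hElex he).1
  have hUB : (B ∪ E) \ B = E := by
    ext x
    simp only [Set.mem_diff, Set.mem_union]
    constructor
    · rintro ⟨h | h, hx⟩
      · exact absurd h hx
      · exact h
    · intro hx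
      exact ⟨Or.inr hx, hdisj x hx⟩
  refine ⟨B, hB', Set.subset_union_left, by rw [hUB]; exact hEcard, ?_⟩
  intro e he
  rcases he with he | he
  · exact hB'.indep.subset (Set.singleton_subset_iff.mpr he)
  · obtain ⟨_, t, _, _, hbase⟩ := hElex he
    have : M.IsBase (insert e (B \ {t})) := hbase
    exact this.indep.subset (Set.singleton_subset_iff.mpr (Set.mem_insert e _))

lemma shiftFam_zero {𝓑 : Set (Set (Fin n))} (h𝓑 : 𝓑 = {B | M.IsBase B}) :
    shiftFam 𝓑 0 = 𝓑 := by
  ext U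
  constructor
  · rintro ⟨B, hB, E, _, hEcard, rfl⟩
    have : E = ∅ := (Set.ncard_eq_zero (Set.toFinite E)).mp hEcard
    rw [this, Set.union_empty]
    exact hB
  · intro hU
    exact ⟨U, hU, ∅, Set.empty_subset _, Set.ncard_empty _, (Set.union_empty U).symm⟩

end Aux

/-- Let `M` be a matroid on `{1, …, n}` with base family `𝓑`.  Define
iterates of the adjacency operation by `A⁰(𝓑) = 𝓑` and `A^{ℓ+1}(𝓑) = A(A^ℓ(𝓑))`.  Then
for every `ℓ ≥ 0`, `A^ℓ(𝓑) = S_ℓ(𝓑)`: the family of `ℓ`-th multigraded shift supports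
of a matroidal ideal is obtained by taking `ℓ` times iterated adjacency families
starting from `𝓑`. -/
theorem iterated_adjFam_eq_shiftFam {n : ℕ} (M : Matroid (Fin n))
    (hE : M.E = Set.univ) (𝓑 : Set (Set (Fin n))) (h𝓑 : 𝓑 = {B | M.IsBase B}) :
    ∀ ℓ : ℕ, adjFam^[ℓ] 𝓑 = shiftFam 𝓑 ℓ := by
  intro ℓ
  induction ℓ with
  | zero => simp [shiftFam_zero (M := M) h𝓑]
  | succ ℓ ih =>
    rw [Function.iterate_succ_apply', ih]
    ext U
    constructor
    · -- adjFam (S_ℓ) ⊆ S_{ℓ+1}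
      rintro ⟨X, hX, Y, hY, ⟨_, hYX⟩, rfl⟩
      obtain ⟨B, hB, hBX, hcardX, hloopX⟩ := good_of_mem_shiftFam hE h𝓑 hX
      obtain ⟨_, _, _, _, hloopY⟩ := good_of_mem_shiftFam hE h𝓑 hY
      obtain ⟨g, hg⟩ := Set.ncard_eq_one.mp hYX
      have hgY : g ∈ Y \ X := by rw [hg]; rfl
      have hUX : X ∪ Y = insert g X := by
        rw [Set.union_comm, ← Set.diff_union_self, hg, Set.singleton_union]
      refine mem_shiftFam_of_good hE h𝓑 hB (hBX.trans Set.subset_union_left) ?_ ?_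
      · have hgB : g ∉ X := hgY.2
        have : (X ∪ Y) \ B = insert g (X \ B) := by
          rw [hUX]
          ext x
          simp only [Set.mem_diff, Set.mem_insert_iff]
          constructor
          · rintro ⟨h | h, hx⟩
            · exact Or.inl h
            · exact Or.inr ⟨h, hx⟩
          · rintro (rfl | ⟨h, hx⟩)
            · exact ⟨Or.inl rfl, fun h => hgB (hBX h)⟩
            · exact ⟨Or.inr h, hx⟩
        rw [this, Set.ncard_insert_of_notMem (fun h => hgY.2 h.1), hcardX]
      · intro e he
        rcases he with he | he
        · exact hloopX e he
        · exact hloopY e he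
    · -- S_{ℓ+1} ⊆ adjFam (S_ℓ)
      rintro ⟨B, hB, E, hElex, hEcard, rfl⟩
      have hBbase : M.IsBase B := by rwa [h𝓑] at hB
      rcases Nat.eq_zero_or_pos ℓ with rfl | hpos
      · -- ℓ = 0 : use an exchange
        obtain ⟨e, he⟩ := Set.ncard_eq_one.mp hEcard
        subst he
        obtain ⟨heB, t, htB, het, hC⟩ := hElex rfl
        have hne : e ≠ t := ne_of_lt het
        refine ⟨B, by rw [shiftFam_zero (M := M) h𝓑]; exact hB,
          insert e (B \ {t}), by rw [shiftFam_zero (M := M) h𝓑]; exact hC, ⟨?_, ?_⟩, ?_⟩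
        · have : B \ insert e (B \ {t}) = {t} := by
            ext x
            simp only [Set.mem_diff, Set.mem_insert_iff, Set.mem_singleton_iff, not_or,
              Set.mem_diff, not_and, not_not]
            constructor
            · rintro ⟨hxB, hxe, h⟩
              exact h hxB
            · rintro rfl
              exact ⟨htB, fun h => heB (h ▸ htB), fun _ => rfl⟩
          rw [this, Set.ncard_singleton]
        · have : insert e (B \ {t}) \ B = {e} := by
            ext x
            simp only [Set.mem_diff, Set.mem_insert_iff, Set.mem_singleton_iff]
            constructor
            · rintro ⟨rfl | ⟨hxB, _⟩, hx⟩
              · rfl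
              · exact absurd hxB hx
            · rintro rfl
              exact ⟨Or.inl rfl, heB⟩
          rw [this, Set.ncard_singleton]
        · ext x
          simp only [Set.mem_union, Set.mem_insert_iff, Set.mem_diff, Set.mem_singleton_iff]
          constructor
          · rintro (h | rfl)
            · exact Or.inl h
            · exact Or.inr (Or.inl rfl)
          · rintro (h | rfl | ⟨h, _⟩)
            · exact Or.inl h
            · exact Or.inr rfl
            · exact Or.inl h
      · -- ℓ ≥ 1 : remove two different elements of E
        have h2 : 1 < E.ncard := by omega
        obtain ⟨e, f, heE, hfE, hef⟩ := (Set.one_lt_ncard_iff (Set.toFinite E)).mp h2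
        have hXmem : B ∪ (E \ {e}) ∈ shiftFam 𝓑 ℓ := by
          refine ⟨B, hB, E \ {e}, (Set.diff_subset).trans hElex, ?_, rfl⟩
          rw [Set.ncard_diff_singleton_of_mem heE, hEcard]
          omega
        have hYmem : B ∪ (E \ {f}) ∈ shiftFam 𝓑 ℓ := by
          refine ⟨B, hB, E \ {f}, (Set.diff_subset).trans hElex, ?_, rfl⟩
          rw [Set.ncard_diff_singleton_of_mem hfE, hEcard]
          omega
        have hdisj : ∀ x ∈ E, x ∉ B := fun x hx => (hElex hx).1
        refine ⟨B ∪ (E \ {e}), hXmem, B ∪ (E \ {f}), hYmem, ⟨?_, ?_⟩, ?_⟩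
        · have : (B ∪ (E \ {e})) \ (B ∪ (E \ {f})) = {f} := by
            ext x
            simp only [Set.mem_diff, Set.mem_union, Set.mem_singleton_iff, not_or]
            constructor
            · rintro ⟨h | ⟨hxE, hxe⟩, hxB, hxEf⟩
              · exact absurd h hxB
              · by_contra hxf
                exact hxEf ⟨hxE, hxf⟩
            · rintro rfl
              exact ⟨Or.inr ⟨hfE, fun h => hef (h.symm)⟩, hdisj x hfE, fun h => h.2 rfl⟩
          rw [this, Set.ncard_singleton]
        · have : (B ∪ (E \ {f})) \ (B ∪ (E \ {e})) = {e} := by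
            ext x
            simp only [Set.mem_diff, Set.mem_union, Set.mem_singleton_iff, not_or]
            constructor
            · rintro ⟨h | ⟨hxE, hxf⟩, hxB, hxEe⟩
              · exact absurd h hxB
              · by_contra hxe
                exact hxEe ⟨hxE, hxe⟩
            · rintro rfl
              exact ⟨Or.inr ⟨heE, hef⟩, hdisj x heE, fun h => h.2 rfl⟩
          rw [this, Set.ncard_singleton]
        · ext x
          simp only [Set.mem_union, Set.mem_diff, Set.mem_singleton_iff]
          constructor
          · rintro (h | h)
            · exact Or.inl (Or.inl h)
            · by_cases hxe : x = e
              · subst hxe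
                exact Or.inr (Or.inr ⟨h, fun hh => hef hh⟩)
              · exact Or.inl (Or.inr ⟨h, hxe⟩)
          · rintro ((h | ⟨h, _⟩) | (h | ⟨h, _⟩))
            · exact Or.inl h
            · exact Or.inr h
            · exact Or.inl h
            · exact Or.inr h
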